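/- Every finite alternate module admits a Lagrangian, and moreover any isotropic subgroup is contained in some Lagrangian. -/

import Mathlib

/-- Every finite alternate module admits a Lagrangian; moreover every isotropic
subgroup is contained in a Lagrangian. -/
theorem exists_lagrangian {A : Type*} [AddCommGroup A] [Fintype A]
    (φ : A → A → AddCircle (1 : ℚ))
    (hL : ∀ a b c : A, φ (a + b) c = φ a c + φ b c)
    (hR : ∀ a b c : A, φ a (b + c) = φ a b + φ a c)
    (halt : ∀ a : A, φ a a = 0) :
    (∃ L : AddSubgroup A, (L : Set A) = {a : A | ∀ l ∈ L, φ a l = 0}) ∧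
    ∀ K : AddSubgroup A, (K : Set A) ⊆ {a : A | ∀ k ∈ K, φ a k = 0} →
      ∃ L : AddSubgroup A, K ≤ L ∧ (L : Set A) = {a : A | ∀ l ∈ L, φ a l = 0} := by
  classical
  -- additive homs in each variable
  set f : A → A →+ AddCircle (1:ℚ) :=
    fun b => AddMonoidHom.mk' (fun a => φ a b) (fun x y => hL x y b) with hf
  set g : A → A →+ AddCircle (1:ℚ) :=
    fun a => AddMonoidHom.mk' (fun b => φ a b) (fun x y => hR a x y) with hg
  have hsmulL : ∀ (m : ℤ) (a b : A), φ (m • a) b = m • φ a b := by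
    intro m a b
    exact map_zsmul (f b) m a
  have hsmulR : ∀ (m : ℤ) (a b : A), φ a (m • b) = m • φ a b := by
    intro m a b
    exact map_zsmul (g a) m b
  have skew : ∀ a b : A, φ b a = - φ a b := by
    intro a b
    have h := halt (a + b)
    rw [hL, hR, hR, halt, halt, zero_add, add_zero] at h
    exact eq_neg_of_add_eq_zero_right h
  have key : ∀ K : AddSubgroup A, (∀ x ∈ K, ∀ y ∈ K, φ x y = 0) →
      ∃ L : AddSubgroup A, K ≤ L ∧ (L : Set A) = {a : A | ∀ l ∈ L, φ a l = 0} := by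
    intro K hK
    set S : Set (AddSubgroup A) :=
      {L | K ≤ L ∧ ∀ x ∈ L, ∀ y ∈ L, φ x y = 0} with hS
    have hfin : S.Finite := Set.toFinite S
    have hne : K ∈ S := ⟨le_refl K, hK⟩
    obtain ⟨L, hLS, hmax0⟩ := Set.Finite.exists_maximalFor id S hfin ⟨K, hne⟩
    have hmax : ∀ a' ∈ S, id L ≤ id a' → id L = id a' := fun a' ha' h => le_antisymm h (hmax0 ha' h)
    obtain ⟨hKL, hiso⟩ := hLS
    refine ⟨L, hKL, ?_⟩
    apply Set.Subset.antisymm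
    · intro x hx l hl
      exact hiso x hx l hl
    · intro a ha
      simp only [Set.mem_setOf_eq] at ha
      -- enlarge L by a; maximality forces a ∈ L
      set L' := L ⊔ AddSubgroup.closure {a} with hL'
      have haL' : a ∈ L' := by
        have h : AddSubgroup.closure {a} ≤ L' := le_sup_right
        exact h (AddSubgroup.mem_closure_singleton.2 ⟨1, one_zsmul a⟩)
      have hiso' : ∀ x ∈ L', ∀ y ∈ L', φ x y = 0 := by
        intro x hx y hy
        rw [AddSubgroup.mem_sup] at hx hy
        obtain ⟨l1, hl1, z1, hz1, rfl⟩ := hx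
        obtain ⟨l2, hl2, z2, hz2, rfl⟩ := hy
        obtain ⟨m, rfl⟩ := AddSubgroup.mem_closure_singleton.1 hz1
        obtain ⟨n, rfl⟩ := AddSubgroup.mem_closure_singleton.1 hz2
        have h1 : φ l1 l2 = 0 := hiso l1 hl1 l2 hl2
        have h2 : φ l1 (n • a) = 0 := by
          rw [hsmulR, skew, ha l1 hl1, neg_zero, smul_zero]
        have h3 : φ (m • a) l2 = 0 := by
          rw [hsmulL, ha l2 hl2, smul_zero]
        have h4 : φ (m • a) (n • a) = 0 := by
          rw [hsmulL, hsmulR, halt, smul_zero, smul_zero]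
        rw [hL, hR, hR, h1, h2, h3, h4]
        simp
      have hL'S : L' ∈ S := ⟨le_trans hKL le_sup_left, hiso'⟩
      have : L = L' := hmax L' hL'S le_sup_left
      rw [this]
      exact haL'
  constructor
  · obtain ⟨L, _, hLag⟩ := key ⊥ (by
      intro x hx y hy
      rw [AddSubgroup.mem_bot] at hx hy
      rw [hx, hy, halt])
    exact ⟨L, hLag⟩
  · intro K hKiso
    exact key K (fun x hx y hy => hKiso hx y hy)
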